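/- (Kernel negativity breaks Pareto monotonicity) Let K ∈ L¹(Ω) with Ω = [0,1]ᵐ. If there is an axis-aligned box Q = ∏ᵢ[αᵢ,βᵢ] ⊆ Ω with ∫_Q K(y) dy < 0, then with a = (α₁,…,α_m), b⁽ⁱ⁾ = a except with i-th coordinate βᵢ, A = {a}, and B = {b⁽¹⁾,…,b⁽ᵐ⁾} and r = (1,…,1), one has Dom_r(B) ⊆ Dom_r(A), Dom_r(A) \ Dom_r(B) equals Q up to a Lebesgue null set, and WHV_{K,r}(A) − WHV_{K,r}(B) = ∫_Q K(y) dy < 0. -/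

import Mathlib

open MeasureTheory

variable {m : ℕ}

/-- Dominated region of a finite set bounded by reference point `r`. -/
def dom (A : Finset (Fin m → ℝ)) (r : Fin m → ℝ) : Set (Fin m → ℝ) :=
  ⋃ a ∈ A, Set.Icc a r

theorem negative_kernel_breaks_pareto_monotonicity [NeZero m]
    (K : (Fin m → ℝ) → ℝ)
    (hKint : IntegrableOn K (Set.Icc (fun _ => (0 : ℝ)) (fun _ => 1)))
    (α β : Fin m → ℝ) (hαβ : ∀ i, α i ≤ β i)
    (hQsub : Set.Icc α β ⊆ Set.Icc (fun _ => (0 : ℝ)) (fun _ => 1))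
    (hQneg : ∫ y in Set.Icc α β, K y < 0) :
    dom (Finset.image (fun i => Function.update α i (β i)) Finset.univ)
        (fun _ => 1) ⊆ dom {α} (fun _ => 1) ∧
    volume (symmDiff
      (dom {α} (fun _ => 1) \
        dom (Finset.image (fun i => Function.update α i (β i)) Finset.univ) (fun _ => 1))
      (Set.Icc α β)) = 0 ∧
    (∫ y in dom {α} (fun _ => 1), K y) -
      (∫ y in dom (Finset.image (fun i => Function.update α i (β i)) Finset.univ)
        (fun _ => 1), K y) = ∫ y in Set.Icc α β, K y ∧
    ∫ y in Set.Icc α β, K y < 0 := by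
  have hαβ' : α ≤ β := fun i => hαβ i
  have hαmem : α ∈ Set.Icc (fun _ => (0:ℝ)) (fun _ => 1) := hQsub ⟨le_rfl, hαβ'⟩
  have hβmem : β ∈ Set.Icc (fun _ => (0:ℝ)) (fun _ => 1) := hQsub ⟨hαβ', le_rfl⟩
  have hα0 : ∀ i, (0:ℝ) ≤ α i := fun i => hαmem.1 i
  have hβ1 : ∀ i, β i ≤ 1 := fun i => hβmem.2 i
  set f : Fin m → (Fin m → ℝ) := fun i => Function.update α i (β i) with hf
  have hD : dom {α} (fun _ => (1:ℝ)) = Set.Icc α (fun _ => 1) := by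
    simp [dom]
  have hE : dom (Finset.image f Finset.univ) (fun _ => (1:ℝ))
      = ⋃ i, Set.Icc (f i) (fun _ => 1) := by
    simp only [dom]
    ext y
    simp [Finset.mem_image]
  have hDE : Set.Icc α (fun _ => (1:ℝ)) \ (⋃ i, Set.Icc (f i) (fun _ => 1))
      = Set.pi Set.univ (fun i => Set.Ico (α i) (β i)) := by
    ext y
    simp only [Set.mem_diff, Set.mem_Icc, Set.mem_iUnion, not_exists, Set.mem_pi,
      Set.mem_univ, Set.mem_Ico, forall_const, Pi.le_def]
    constructor
    · rintro ⟨⟨hay, hy1⟩, hnot⟩ i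
      refine ⟨hay i, ?_⟩
      by_contra h
      push_neg at h
      exact hnot i ⟨fun j => by
        rcases eq_or_ne j i with rfl | hji
        · simpa [hf] using h
        · simpa [hf, Function.update_of_ne hji] using hay j, hy1⟩
    · intro h
      refine ⟨⟨fun i => (h i).1, fun i => ((h i).2.le.trans (hβ1 i))⟩, fun i hi => ?_⟩
      have : β i ≤ y i := by simpa [hf] using hi.1 i
      exact absurd this (not_le.mpr (h i).2)
  have hplane : ∀ (i : Fin m) (c : ℝ), volume {y : Fin m → ℝ | y i = c} = 0 := by
    intro i c
    have hset : {y : Fin m → ℝ | y i = c}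
        = Set.pi Set.univ (fun j => if j = i then ({c} : Set ℝ) else Set.univ) := by
      ext y
      simp only [Set.mem_setOf_eq, Set.mem_pi, Set.mem_univ, forall_const]
      constructor
      · intro h j
        by_cases hj : j = i
        · subst hj; simp [h]
        · simp [hj]
      · intro h
        have := h i
        simpa using this
    rw [hset, volume_pi_pi]
    exact Finset.prod_eq_zero (Finset.mem_univ i) (by simp)
  have hIcoIcc : Set.pi Set.univ (fun i => Set.Ico (α i) (β i)) ⊆ Set.Icc α β := by
    rw [← Set.pi_univ_Icc]
    exact Set.pi_mono fun i _ => Set.Ico_subset_Icc_self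
  have hsymm : volume (symmDiff (Set.pi Set.univ (fun i => Set.Ico (α i) (β i)))
      (Set.Icc α β)) = 0 := by
    have hsub : symmDiff (Set.pi Set.univ (fun i => Set.Ico (α i) (β i))) (Set.Icc α β)
        ⊆ ⋃ i, {y : Fin m → ℝ | y i = β i} := by
      intro y hy
      rcases hy with hy | hy
      · exact absurd (hIcoIcc hy.1) hy.2
      · rcases hy with ⟨hy1, hy2⟩
        rw [Set.mem_pi] at hy2
        push_neg at hy2
        obtain ⟨i, -, hi⟩ := hy2
        rw [← Set.pi_univ_Icc, Set.mem_pi] at hy1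
        have h1 := hy1 i (Set.mem_univ i)
        rw [Set.mem_Ico] at hi
        push_neg at hi
        exact Set.mem_iUnion.mpr ⟨i, le_antisymm h1.2 (hi h1.1)⟩
    exact measure_mono_null hsub (measure_iUnion_null fun i => hplane i (β i))
  have hEsubD : (⋃ i, Set.Icc (f i) (fun _ => (1:ℝ))) ⊆ Set.Icc α (fun _ => 1) := by
    refine Set.iUnion_subset fun i => Set.Icc_subset_Icc ?_ le_rfl
    intro j
    rcases eq_or_ne j i with rfl | hji
    · simpa [hf] using hαβ j
    · simp [hf, Function.update_of_ne hji]
  have hDsub : Set.Icc α (fun _ => (1:ℝ)) ⊆ Set.Icc (fun _ => (0:ℝ)) (fun _ => 1) :=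
    Set.Icc_subset_Icc (fun i => hα0 i) le_rfl
  have hintD : IntegrableOn K (Set.Icc α (fun _ => (1:ℝ))) := hKint.mono_set hDsub
  have hintE : IntegrableOn K (⋃ i, Set.Icc (f i) (fun _ => (1:ℝ))) :=
    hintD.mono_set hEsubD
  have hmeasE : MeasurableSet (⋃ i, Set.Icc (f i) (fun _ => (1:ℝ))) :=
    MeasurableSet.iUnion fun i => measurableSet_Icc
  have haeeq : (Set.Icc α (fun _ => (1:ℝ)) \ (⋃ i, Set.Icc (f i) (fun _ => 1)))
      =ᵐ[volume] Set.Icc α β := by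
    refine measure_symmDiff_eq_zero_iff.mp ?_
    rw [← hDE] at hsymm
    exact hsymm
  refine ⟨?_, ?_, ?_, hQneg⟩
  · rw [hD, hE]; exact hEsubD
  · rw [hD, hE, hDE]; exact hsymm
  · rw [hD, hE]
    rw [← MeasureTheory.integral_diff hmeasE hintD hEsubD]
    exact setIntegral_congr_set haeeq
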